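/- For all nonnegative integers t and n, d(4t+1, 4n+3) = d(2t+1, 2n+1) − 1, where d(t,n) = r(n+t) − r(n) and r counts overlapping occurrences of the block 11 in binary. -/

import Mathlib

/-- `r n` counts indices `j ≥ 0` with the `j`-th and `(j+1)`-st binary digits of `n` both `1`. -/
def r (n : ℕ) : ℕ :=
  ((Finset.range (n + 1)).filter (fun j => n.testBit j ∧ n.testBit (j + 1))).card

/-- `d t n = r (n + t) - r n` as an integer. -/
def d (t n : ℕ) : ℤ := (r (n + t) : ℤ) - (r n : ℤ)

lemma r_eq (n N : ℕ) (h : n < N) :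
    r n = ((Finset.range N).filter (fun j => n.testBit j ∧ n.testBit (j + 1))).card := by
  unfold r
  congr 1
  ext j
  simp only [Finset.mem_filter, Finset.mem_range]
  constructor
  · rintro ⟨hj, hb⟩; exact ⟨lt_of_lt_of_le hj h, hb⟩
  · rintro ⟨hj, hb⟩
    refine ⟨?_, hb⟩
    by_contra hlt
    push_neg at hlt
    have : n.testBit j = false := by
      apply Nat.testBit_lt_two_pow
      calc n < n + 1 := Nat.lt_succ_self n
        _ ≤ j := hlt
        _ < 2 ^ j := Nat.lt_two_pow_self
    simp [this] at hb

lemma tb_succ (m j : ℕ) : (2 * m).testBit (j + 1) = m.testBit j := by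
  rw [Nat.testBit_succ, Nat.mul_div_cancel_left m (by norm_num)]

lemma tb_succ' (m j : ℕ) : (2 * m + 1).testBit (j + 1) = m.testBit j := by
  rw [Nat.testBit_succ]
  have : (2 * m + 1) / 2 = m := by omega
  rw [this]

lemma r_two_mul (m : ℕ) : r (2 * m) = r m := by
  rw [r_eq (2 * m) (2 * m + 2) (by omega), r_eq m (2 * m + 1) (by omega)]
  rw [show (Finset.range (2 * m + 2)).filter
        (fun j => (2 * m).testBit j ∧ (2 * m).testBit (j + 1)) =
      ((Finset.range (2 * m + 1)).filter
        (fun j => m.testBit j ∧ m.testBit (j + 1))).image (· + 1) from ?_]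
  · exact Finset.card_image_of_injective _ (fun a b => by omega)
  ext j
  simp only [Finset.mem_filter, Finset.mem_range, Finset.mem_image]
  constructor
  · rintro ⟨hj, hb1, hb2⟩
    match j with
    | 0 => simp [Nat.testBit_zero, Nat.mul_mod_right] at hb1
    | i + 1 =>
      rw [tb_succ] at hb1; rw [tb_succ] at hb2
      exact ⟨i, ⟨by omega, hb1, hb2⟩, rfl⟩
  · rintro ⟨i, ⟨hi, hb1, hb2⟩, rfl⟩
    rw [tb_succ, tb_succ]
    exact ⟨by omega, hb1, hb2⟩

lemma r_odd (k : ℕ) (hk : k % 2 = 1) : r (2 * k + 1) = r k + 1 := by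
  rw [r_eq (2 * k + 1) (2 * k + 3) (by omega), r_eq k (2 * k + 2) (by omega)]
  have h0 : (2 * k + 1).testBit 0 = true := by
    simp [Nat.testBit_zero]
  rw [show (Finset.range (2 * k + 3)).filter
        (fun j => (2 * k + 1).testBit j ∧ (2 * k + 1).testBit (j + 1)) =
      insert 0 (((Finset.range (2 * k + 2)).filter
        (fun j => k.testBit j ∧ k.testBit (j + 1))).image (· + 1)) from ?_]
  · rw [Finset.card_insert_of_notMem (by simp), Finset.card_image_of_injective _ (fun a b => by omega)]
  ext j
  simp only [Finset.mem_filter, Finset.mem_range, Finset.mem_insert, Finset.mem_image]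
  constructor
  · rintro ⟨hj, hb1, hb2⟩
    match j with
    | 0 => exact Or.inl rfl
    | i + 1 =>
      rw [tb_succ'] at hb1; rw [tb_succ'] at hb2
      exact Or.inr ⟨i, ⟨by omega, hb1, hb2⟩, rfl⟩
  · rintro (rfl | ⟨i, ⟨hi, hb1, hb2⟩, rfl⟩)
    · refine ⟨by omega, h0, ?_⟩
      rw [tb_succ']
      simp [Nat.testBit_zero, hk]
    · rw [tb_succ', tb_succ']
      exact ⟨by omega, hb1, hb2⟩

theorem d_rec (t n : ℕ) : d (4 * t + 1) (4 * n + 3) = d (2 * t + 1) (2 * n + 1) - 1 := by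
  unfold d
  have e1 : 4 * n + 3 + (4 * t + 1) = 2 * (2 * (n + t + 1)) := by ring
  have e2 : 2 * n + 1 + (2 * t + 1) = 2 * (n + t + 1) := by ring
  have e3 : 4 * n + 3 = 2 * (2 * n + 1) + 1 := by ring
  rw [e1, e2, e3, r_two_mul, r_two_mul, r_odd (2 * n + 1) (by omega)]
  push_cast
  ring
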